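/- Let H be a finite simple graph with at least one edge that is both vertex-transitive and edge-transitive, let H_1, …, H_n be nonempty graphs on V(H) whose edge sets are the orbits of Aut(H) acting on unordered pairs of distinct vertices of H, with H_n = H, let A_i denote the adjacency matrix of H_i for 1 ≤ i ≤ n, and let A_0 be the identity matrix of dimension |V(H)|. If z_0, z_1, …, z_n are real numbers such that Z := Σ_{i=0}^n z_i A_i is an entrywise nonnegative positive semidefinite matrix, then the sum of all entries of Z satisfies sum(Z) ≤ (1 + λ_max(A_n)/|λ_min(A_n)|) · sum((J − A_n) ∘ Z), where J is the all-ones matrix and ∘ denotes the entrywise (Schur) product. -/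

import Mathlib

open Matrix Finset

namespace SpectralFrac

variable {V : Type*}

/-- The real adjacency matrix of a simple graph is Hermitian. -/
theorem adjMatrix_isHermitian [Fintype V] [DecidableEq V] (G : SimpleGraph V)
    [DecidableRel G.Adj] : (G.adjMatrix ℝ).IsHermitian := by
  rw [Matrix.IsHermitian, Matrix.conjTranspose_eq_transpose_of_trivial]
  exact G.isSymm_adjMatrix

/-- `s⁺(G)`: the sum of the squares of the positive eigenvalues of the adjacency matrix. -/
noncomputable def sPos [Fintype V] [DecidableEq V] (G : SimpleGraph V) [DecidableRel G.Adj] : ℝ :=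
  ∑ i, if 0 < (adjMatrix_isHermitian G).eigenvalues i
    then ((adjMatrix_isHermitian G).eigenvalues i) ^ 2 else 0

/-- `s⁻(G)`: the sum of the squares of the negative eigenvalues of the adjacency matrix. -/
noncomputable def sNeg [Fintype V] [DecidableEq V] (G : SimpleGraph V) [DecidableRel G.Adj] : ℝ :=
  ∑ i, if (adjMatrix_isHermitian G).eigenvalues i < 0
    then ((adjMatrix_isHermitian G).eigenvalues i) ^ 2 else 0

/-- The largest eigenvalue of the adjacency matrix of `G`. -/
noncomputable def lamMax [Fintype V] [DecidableEq V] (G : SimpleGraph V) [DecidableRel G.Adj] : ℝ :=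
  ⨆ i, (adjMatrix_isHermitian G).eigenvalues i

/-- The smallest eigenvalue of the adjacency matrix of `G`. -/
noncomputable def lamMin [Fintype V] [DecidableEq V] (G : SimpleGraph V) [DecidableRel G.Adj] : ℝ :=
  ⨅ i, (adjMatrix_isHermitian G).eigenvalues i

/-- A graph is edge-transitive if its automorphism group acts transitively on edges. -/
def IsEdgeTransitive (H : SimpleGraph V) : Prop :=
  ∀ ⦃u v x y : V⦄, H.Adj u v → H.Adj x y → ∃ π : H ≃g H, s(π u, π v) = s(x, y)

/-- A graph is vertex-transitive if its automorphism group acts transitively on vertices. -/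
def IsVertexTransitive (H : SimpleGraph V) : Prop :=
  ∀ u v : V, ∃ π : H ≃g H, π u = v

/-- The Kneser graph `K_{n;k}`: vertices are `k`-subsets of an `n`-set, adjacent iff disjoint. -/
def kneserGraph (n k : ℕ) : SimpleGraph {s : Finset (Fin n) // s.card = k} where
  Adj a b := a ≠ b ∧ Disjoint a.1 b.1
  symm := ⟨fun a b h => ⟨h.1.symm, h.2.symm⟩⟩
  loopless := ⟨fun a h => h.1 rfl⟩

instance kneserGraph.adjDecidable (n k : ℕ) : DecidableRel (kneserGraph n k).Adj :=
  fun a b => inferInstanceAs (Decidable (a ≠ b ∧ Disjoint a.1 b.1))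

/-- The fractional chromatic number: the infimum of `n / k` over all pairs `(n, k)` such that
`G` admits a homomorphism into the Kneser graph `K_{n;k}`. -/
noncomputable def fracChromaticNumber (G : SimpleGraph V) : ℝ :=
  sInf {q : ℝ | ∃ n k : ℕ, 0 < k ∧ Nonempty (G →g kneserGraph n k) ∧ q = (n : ℝ) / k}

/-- The automorphism group of `H`, as a finset of permutations of the vertices. -/
def autSet [Fintype V] [DecidableEq V] (H : SimpleGraph V) [DecidableRel H.Adj] :
    Finset (Equiv.Perm V) :=
  Finset.univ.filter fun π => ∀ u v, H.Adj (π u) (π v) ↔ H.Adj u v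

end SpectralFrac

namespace SpectralFrac

section Aux
variable {V : Type*} [Fintype V] [DecidableEq V]

lemma eig_expand {A : Matrix V V ℝ} (hA : A.IsHermitian) (y : V → ℝ) :
    y ⬝ᵥ (A *ᵥ y) = ∑ i, hA.eigenvalues i * ((hA.eigenvectorBasis i : V → ℝ) ⬝ᵥ y) ^ 2 ∧
    y ⬝ᵥ y = ∑ i, ((hA.eigenvectorBasis i : V → ℝ) ⬝ᵥ y) ^ 2 := by
  set b := hA.eigenvectorBasis with hb
  have h2 : ∀ (x z : EuclideanSpace ℝ V),
      (inner ℝ x z : ℝ) = (x : V → ℝ) ⬝ᵥ (z : V → ℝ) := by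
    intro x z; simp [PiLp.inner_apply, dotProduct, mul_comm]
  have hAT : Aᵀ = A := by
    have := hA.eq
    rwa [Matrix.conjTranspose_eq_transpose_of_trivial] at this
  have hsymdot : ∀ (x z : V → ℝ), x ⬝ᵥ (A *ᵥ z) = (A *ᵥ x) ⬝ᵥ z := by
    intro x z
    rw [Matrix.dotProduct_mulVec, ← Matrix.mulVec_transpose, hAT]
  have par : ∀ (x z : EuclideanSpace ℝ V),
      ∑ i, ((x : V → ℝ) ⬝ᵥ (b i : V → ℝ)) * ((b i : V → ℝ) ⬝ᵥ (z : V → ℝ))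
        = (x : V → ℝ) ⬝ᵥ (z : V → ℝ) := by
    intro x z
    have := b.sum_inner_mul_inner x z
    simp_rw [h2] at this
    exact this
  constructor
  · have := par (WithLp.toLp 2 y) (WithLp.toLp 2 (A *ᵥ y : V → ℝ))
    simp only [WithLp.ofLp_toLp] at this
    rw [← this]
    apply Finset.sum_congr rfl
    intro i _
    have h3 : A *ᵥ (b i : V → ℝ) = hA.eigenvalues i • (b i : V → ℝ) :=
      hA.mulVec_eigenvectorBasis i
    rw [hsymdot, h3, smul_dotProduct, smul_eq_mul, dotProduct_comm]
    ring
  · have := par (WithLp.toLp 2 y) (WithLp.toLp 2 y)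
    simp only [WithLp.ofLp_toLp] at this
    rw [← this]
    apply Finset.sum_congr rfl
    intro i _
    rw [dotProduct_comm]; ring

lemma eigbasis_dot_self {A : Matrix V V ℝ} (hA : A.IsHermitian) (i : V) :
    ((hA.eigenvectorBasis i : V → ℝ)) ⬝ᵥ ((hA.eigenvectorBasis i : V → ℝ)) = 1 := by
  have h2 : ∀ (x z : EuclideanSpace ℝ V),
      (inner ℝ x z : ℝ) = (x : V → ℝ) ⬝ᵥ (z : V → ℝ) := by
    intro x z; simp [PiLp.inner_apply, dotProduct, mul_comm]
  have horth := hA.eigenvectorBasis.orthonormal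
  rw [orthonormal_iff_ite] at horth
  have h := horth i i
  rw [h2] at h
  simpa using h

lemma quad_expand (M : Matrix V V ℝ) (y : V → ℝ) :
    y ⬝ᵥ (M *ᵥ y) = ∑ u, ∑ v, M u v * y u * y v := by
  simp only [dotProduct, mulVec, Finset.mul_sum]
  apply Finset.sum_congr rfl; intro u _
  apply Finset.sum_congr rfl; intro v _
  ring

lemma mem_autSet_iff (H : SimpleGraph V) [DecidableRel H.Adj] (π : Equiv.Perm V) :
    π ∈ autSet H ↔ ∀ u v, H.Adj (π u) (π v) ↔ H.Adj u v := by
  simp [autSet]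

lemma autSet_mul_mem (H : SimpleGraph V) [DecidableRel H.Adj] (σ : H ≃g H)
    {π : Equiv.Perm V} (hπ : π ∈ autSet H) : π * σ.toEquiv ∈ autSet H := by
  rw [mem_autSet_iff] at hπ ⊢
  intro u v
  rw [Equiv.Perm.mul_apply, Equiv.Perm.mul_apply, hπ]
  exact σ.map_adj_iff

lemma sum_autSet_reindex (H : SimpleGraph V) [DecidableRel H.Adj] (σ : H ≃g H)
    (F : Equiv.Perm V → ℝ) :
    ∑ π ∈ autSet H, F (π * σ.toEquiv) = ∑ π ∈ autSet H, F π := by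
  refine Finset.sum_equiv (Equiv.mulRight σ.toEquiv) (fun π => ?_) (fun π _ => rfl)
  show π ∈ autSet H ↔ π * σ.toEquiv ∈ autSet H
  constructor
  · intro h; exact autSet_mul_mem H σ h
  · intro h
    have h2 := autSet_mul_mem H σ.symm h
    have he : π * σ.toEquiv * σ.symm.toEquiv = π := by
      ext w
      simp [Equiv.Perm.mul_apply]
    rwa [he] at h2

end Aux

end SpectralFrac

/-- **Lemma.** Let `H` be vertex- and edge-transitive with an edge, let `H_1, …, H_{m+1}` be the
orbit graphs of `Aut(H)` acting on unordered pairs of distinct vertices, with the last one equal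
to `H`, and let `Z = z₀·I + Σᵢ zᵢ·A(Hᵢ)` be entrywise nonnegative and PSD.  Then
`sum(Z) ≤ (1 + λ_max/|λ_min|)·sum((J − A) ∘ Z)` where `A` is the adjacency matrix of `H`. -/
theorem SpectralFrac.scheme_sum_bound {V : Type*} [Fintype V] [DecidableEq V]
    (H : SimpleGraph V) [DecidableRel H.Adj]
    (hHe : H.edgeSet.Nonempty) (hvt : IsVertexTransitive H) (het : IsEdgeTransitive H)
    (m : ℕ) (Hs : Fin (m + 1) → SimpleGraph V) [∀ i, DecidableRel (Hs i).Adj]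
    (hne : ∀ i, (Hs i).edgeSet.Nonempty)
    (hpart : ∀ u v : V, u ≠ v → ∃! i, (Hs i).Adj u v)
    (horb : ∀ i, ∀ ⦃u v x y : V⦄, (Hs i).Adj u v → (Hs i).Adj x y →
      ∃ π : H ≃g H, s(π u, π v) = s(x, y))
    (hinv : ∀ i (π : H ≃g H) (u v : V), (Hs i).Adj u v ↔ (Hs i).Adj (π u) (π v))
    (hlast : Hs (Fin.last m) = H)
    (z0 : ℝ) (z : Fin (m + 1) → ℝ) (Z : Matrix V V ℝ)
    (hZ : Z = z0 • (1 : Matrix V V ℝ) + ∑ i, z i • (Hs i).adjMatrix ℝ)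
    (hZnn : ∀ u v, 0 ≤ Z u v) (hZpsd : Z.PosSemidef) :
    ∑ u, ∑ v, Z u v ≤
      (1 + lamMax H / |lamMin H|) * ∑ u, ∑ v, (1 - H.adjMatrix ℝ u v) * Z u v := by
  classical
  obtain ⟨a, c, hac⟩ : ∃ a c, H.Adj a c := by
    obtain ⟨e, heE⟩ := hHe
    revert heE
    exact Sym2.ind (fun x y h => ⟨x, y, (H.mem_edgeSet).mp h⟩) e
  have hnV' : Nonempty V := ⟨a⟩
  set A : Matrix V V ℝ := H.adjMatrix ℝ with hAdef
  set hA := adjMatrix_isHermitian H with hhA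
  set Λ : ℝ := lamMax H with hLdef
  set μ : ℝ := lamMin H with hmdef
  have hΛ_eq : Λ = ⨆ i, hA.eigenvalues i := rfl
  have hμ_eq : μ = ⨅ i, hA.eigenvalues i := rfl
  have hAapp : ∀ u v, A u v = if H.Adj u v then 1 else 0 := by
    intro u v; simp [hAdef]
  have hAnn : ∀ u v, 0 ≤ A u v := by
    intro u v; rw [hAapp]; split <;> norm_num
  have hRle : ∀ y : V → ℝ, y ⬝ᵥ (A *ᵥ y) ≤ Λ * (y ⬝ᵥ y) := by
    intro y
    obtain ⟨h1, h2⟩ := eig_expand hA y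
    rw [h1, h2, Finset.mul_sum]
    apply Finset.sum_le_sum
    intro i _
    apply mul_le_mul_of_nonneg_right _ (sq_nonneg _)
    rw [hΛ_eq]
    exact le_ciSup (Set.Finite.bddAbove (Set.finite_range _)) i
  have hRge : ∀ y : V → ℝ, μ * (y ⬝ᵥ y) ≤ y ⬝ᵥ (A *ᵥ y) := by
    intro y
    obtain ⟨h1, h2⟩ := eig_expand hA y
    rw [h1, h2, Finset.mul_sum]
    apply Finset.sum_le_sum
    intro i _
    apply mul_le_mul_of_nonneg_right _ (sq_nonneg _)
    rw [hμ_eq]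
    exact ciInf_le (Set.Finite.bddBelow (Set.finite_range _)) i
  obtain ⟨i₀, hi₀⟩ := Finite.exists_min hA.eigenvalues
  have hμi₀ : μ = hA.eigenvalues i₀ := by
    rw [hμ_eq]
    exact le_antisymm (ciInf_le (Set.Finite.bddBelow (Set.finite_range _)) i₀) (le_ciInf hi₀)
  set x : V → ℝ := (hA.eigenvectorBasis i₀ : V → ℝ) with hxdef
  have hxA : A *ᵥ x = μ • x := by
    have h3 : A *ᵥ x = hA.eigenvalues i₀ • x := hA.mulVec_eigenvectorBasis i₀
    rw [h3, hμi₀]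
  have hxx : x ⬝ᵥ x = 1 := eigbasis_dot_self hA i₀
  have hxx' : ∑ u, (x u) ^ 2 = 1 := by
    rw [← hxx]; simp [dotProduct, pow_two]
  set nV : ℝ := (Fintype.card V : ℝ) with hnV
  have hn : 0 < nV := by
    rw [hnV]; exact_mod_cast Fintype.card_pos
  set D : ℝ := ∑ u, ∑ v, A u v with hDdef
  have hD : 0 < D := by
    rw [hDdef]
    have h1 : (1 : ℝ) ≤ ∑ v, A a v := by
      have hc : A a c = 1 := by rw [hAapp, if_pos hac]
      calc (1 : ℝ) = A a c := hc.symm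
        _ ≤ ∑ v, A a v := Finset.single_le_sum (fun v _ => hAnn a v) (Finset.mem_univ c)
    have h2 : ∑ v, A a v ≤ ∑ u, ∑ v, A u v :=
      Finset.single_le_sum (f := fun u => ∑ v, A u v)
        (fun u _ => Finset.sum_nonneg fun v _ => hAnn u v) (Finset.mem_univ a)
    linarith
  have hΛD : D ≤ nV * Λ := by
    have h := hRle (fun _ => 1)
    have hb1 : (fun _ => (1:ℝ)) ⬝ᵥ (A *ᵥ fun _ => (1:ℝ)) = D := by
      rw [quad_expand, hDdef]
      refine Finset.sum_congr rfl fun u _ => Finset.sum_congr rfl fun v _ => by ring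
    have hb2 : ((fun _ => (1:ℝ)) : V → ℝ) ⬝ᵥ ((fun _ => (1:ℝ)) : V → ℝ) = nV := by
      simp [dotProduct, hnV]
    rw [hb1, hb2] at h
    linarith
  have hΛpos : 0 < Λ := by
    by_contra hcon
    push_neg at hcon
    nlinarith
  have hμneg : μ < 0 := by
    set y : V → ℝ := Pi.single a 1 - Pi.single c 1 with hydef
    have hyy : y ⬝ᵥ y = 2 := by
      rw [hydef, sub_dotProduct, dotProduct_sub, dotProduct_sub,
        single_dotProduct, single_dotProduct, single_dotProduct, single_dotProduct]
      simp [Pi.single_apply, hac.ne, hac.ne']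
      norm_num
    have hyAy : y ⬝ᵥ (A *ᵥ y) = -2 := by
      have h1 : A *ᵥ y = (fun i => A i a) - (fun i => A i c) := by
        funext i
        simp [hydef, mulVec, dotProduct, Pi.single_apply, mul_sub,
          Finset.sum_sub_distrib, mul_ite]
      rw [h1, hydef, sub_dotProduct, dotProduct_sub, dotProduct_sub,
        single_dotProduct, single_dotProduct, single_dotProduct, single_dotProduct]
      simp only [one_mul, Pi.sub_apply]
      rw [hAapp a a, hAapp a c, hAapp c a, hAapp c c]
      simp [hac, hac.symm, H.irrefl]
      norm_num
    have h := hRge y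
    rw [hyy, hyAy] at h
    nlinarith
  have h1mem : (1 : Equiv.Perm V) ∈ autSet H := by
    rw [mem_autSet_iff]; intro u v; simp
  set g : ℝ := ((autSet H).card : ℝ) with hgdef
  have hg : 0 < g := by
    rw [hgdef]
    exact_mod_cast Finset.card_pos.mpr ⟨1, h1mem⟩
  have hAinv : ∀ π ∈ autSet H, ∀ u v, A (π u) (π v) = A u v := by
    intro π hπ u v
    rw [mem_autSet_iff] at hπ
    rw [hAapp, hAapp, if_congr (hπ u v) rfl rfl]
  have hfeq : ∀ u v : V, (∑ π ∈ autSet H, (x (π u)) ^ 2) = ∑ π ∈ autSet H, (x (π v)) ^ 2 := by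
    intro u v
    obtain ⟨σ, hσ⟩ := hvt u v
    have h := sum_autSet_reindex H σ (fun π => (x (π u)) ^ 2)
    rw [← h]
    refine Finset.sum_congr rfl fun π _ => ?_
    rw [Equiv.Perm.mul_apply, show σ.toEquiv u = σ u from rfl, hσ]
  have hfval : ∀ u : V, (∑ π ∈ autSet H, (x (π u)) ^ 2) = g / nV := by
    intro u
    have hgsum : ∑ w, ∑ π ∈ autSet H, (x (π w)) ^ 2 = g := by
      rw [Finset.sum_comm]
      have h1 : ∀ π : Equiv.Perm V, ∑ w, (x (π w)) ^ 2 = 1 := fun π => by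
        rw [← hxx']
        exact Equiv.sum_comp π (fun w => x w ^ 2)
      rw [Finset.sum_congr rfl (fun π _ => h1 π), Finset.sum_const, hgdef,
        nsmul_eq_mul, mul_one]
    have hconst : ∑ w, ∑ π ∈ autSet H, (x (π w)) ^ 2
        = nV * ∑ π ∈ autSet H, (x (π u)) ^ 2 := by
      rw [Finset.sum_congr rfl (fun w _ => hfeq w u), Finset.sum_const,
        nsmul_eq_mul, hnV, Finset.card_univ]
    rw [hconst] at hgsum
    rw [eq_div_iff hn.ne']
    linarith [hgsum]
  have hgpmove : ∀ (σ : H ≃g H) (u v : V),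
      (∑ π ∈ autSet H, x (π (σ u)) * x (π (σ v))) = ∑ π ∈ autSet H, x (π u) * x (π v) := by
    intro σ u v
    have h := sum_autSet_reindex H σ (fun π => x (π u) * x (π v))
    rw [← h]
    exact Finset.sum_congr rfl fun π _ => rfl
  have hgpsym : ∀ u v : V,
      (∑ π ∈ autSet H, x (π u) * x (π v)) = ∑ π ∈ autSet H, x (π v) * x (π u) :=
    fun u v => Finset.sum_congr rfl fun π _ => mul_comm _ _
  have hgpedge : ∀ u v : V, H.Adj u v →
      (∑ π ∈ autSet H, x (π u) * x (π v)) = ∑ π ∈ autSet H, x (π a) * x (π c) := by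
    intro u v huv
    obtain ⟨σ, hσ⟩ := het huv hac
    rw [Sym2.eq_iff] at hσ
    rcases hσ with ⟨h1, h2⟩ | ⟨h1, h2⟩
    · rw [← h1, ← h2]
      exact (hgpmove σ u v).symm
    · rw [← h1, ← h2]
      exact (hgpsym u v).trans (hgpmove σ v u).symm
  have hxAx : ∀ π ∈ autSet H, ∑ u, ∑ v, A u v * x (π u) * x (π v) = μ := by
    intro π hπ
    have base : ∑ u, ∑ v, A u v * x u * x v = μ := by
      rw [← quad_expand A x, hxA, dotProduct_smul, smul_eq_mul, hxx, mul_one]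
    calc ∑ u, ∑ v, A u v * x (π u) * x (π v)
        = ∑ u, ∑ v, A (π u) (π v) * x (π u) * x (π v) := by
          refine Finset.sum_congr rfl fun u _ => Finset.sum_congr rfl fun v _ => ?_
          rw [hAinv π hπ]
      _ = ∑ u, ∑ v, A (π u) v * x (π u) * x v :=
          Finset.sum_congr rfl fun u _ =>
            Equiv.sum_comp π (fun w => A (π u) w * x (π u) * x w)
      _ = ∑ u, ∑ v, A u v * x u * x v :=
          Equiv.sum_comp π (fun w => ∑ v, A w v * x w * x v)
      _ = μ := base
  have hsum_edges : ∑ u, ∑ v, A u v * (∑ π ∈ autSet H, x (π u) * x (π v)) = g * μ := by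
    calc ∑ u, ∑ v, A u v * (∑ π ∈ autSet H, x (π u) * x (π v))
        = ∑ u, ∑ v, ∑ π ∈ autSet H, A u v * x (π u) * x (π v) := by
          refine Finset.sum_congr rfl fun u _ => Finset.sum_congr rfl fun v _ => ?_
          rw [Finset.mul_sum]
          exact Finset.sum_congr rfl fun π _ => by ring
      _ = ∑ u, ∑ π ∈ autSet H, ∑ v, A u v * x (π u) * x (π v) :=
          Finset.sum_congr rfl fun u _ => Finset.sum_comm
      _ = ∑ π ∈ autSet H, ∑ u, ∑ v, A u v * x (π u) * x (π v) := Finset.sum_comm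
      _ = ∑ π ∈ autSet H, μ := Finset.sum_congr rfl fun π hπ => hxAx π hπ
      _ = g * μ := by rw [Finset.sum_const, nsmul_eq_mul, hgdef]
  have hedgeval : (∑ π ∈ autSet H, x (π a) * x (π c)) = g * μ / D := by
    have hfactor : ∑ u, ∑ v, A u v * (∑ π ∈ autSet H, x (π u) * x (π v))
        = D * (∑ π ∈ autSet H, x (π a) * x (π c)) := by
      calc ∑ u, ∑ v, A u v * (∑ π ∈ autSet H, x (π u) * x (π v))
          = ∑ u, ∑ v, A u v * (∑ π ∈ autSet H, x (π a) * x (π c)) := by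
            refine Finset.sum_congr rfl fun u _ => Finset.sum_congr rfl fun v _ => ?_
            by_cases h : H.Adj u v
            · rw [hgpedge u v h]
            · rw [hAapp, if_neg h, zero_mul, zero_mul]
        _ = D * (∑ π ∈ autSet H, x (π a) * x (π c)) := by
            rw [hDdef, Finset.sum_mul]
            refine Finset.sum_congr rfl fun u _ => ?_
            rw [Finset.sum_mul]
    rw [hfactor] at hsum_edges
    rw [eq_div_iff hD.ne']
    linarith [hsum_edges]
  have hgple : ∀ u v : V, (∑ π ∈ autSet H, x (π u) * x (π v)) ≤ g / nV := by
    intro u v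
    have hptw : ∀ π : Equiv.Perm V, x (π u) * x (π v)
        ≤ ((x (π u)) ^ 2 + (x (π v)) ^ 2) / 2 := by
      intro π
      nlinarith [sq_nonneg (x (π u) - x (π v))]
    calc (∑ π ∈ autSet H, x (π u) * x (π v))
        ≤ ∑ π ∈ autSet H, ((x (π u)) ^ 2 + (x (π v)) ^ 2) / 2 :=
          Finset.sum_le_sum fun π _ => hptw π
      _ = ((∑ π ∈ autSet H, (x (π u)) ^ 2) + ∑ π ∈ autSet H, (x (π v)) ^ 2) / 2 := by
          rw [← Finset.sum_add_distrib, ← Finset.sum_div]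
      _ = g / nV := by rw [hfval u, hfval v]; ring
  have hZq : ∀ y : V → ℝ, 0 ≤ ∑ u, ∑ v, Z u v * y u * y v := by
    intro y
    have h := hZpsd.dotProduct_mulVec_nonneg y
    have hst : star y = y := by
      funext w; simp
    rw [hst] at h
    rwa [quad_expand Z y] at h
  clear_value Λ μ nV D g x
  have key : 0 ≤ Λ * (∑ u, ∑ v, Z u v) - (Λ - μ) * (∑ u, ∑ v, A u v * Z u v) := by
    have hK : ∑ u, ∑ v, (Λ - (Λ - μ) * A u v) * Z u v
        = Λ * (∑ u, ∑ v, Z u v) - (Λ - μ) * (∑ u, ∑ v, A u v * Z u v) := by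
      rw [Finset.mul_sum, Finset.mul_sum, ← Finset.sum_sub_distrib]
      refine Finset.sum_congr rfl fun u _ => ?_
      rw [Finset.mul_sum, Finset.mul_sum, ← Finset.sum_sub_distrib]
      exact Finset.sum_congr rfl fun v _ => by ring
    rw [← hK]
    have hcomb : ∑ u, ∑ v, (Λ - (Λ - μ) * A u v) * Z u v
        = (nV * Λ / g) * (∑ u, ∑ v, (∑ π ∈ autSet H, x (π u) * x (π v)) * Z u v)
          + ∑ u, ∑ v, (Λ - (Λ - μ) * A u v
              - (nV * Λ / g) * (∑ π ∈ autSet H, x (π u) * x (π v))) * Z u v := by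
      rw [Finset.mul_sum, ← Finset.sum_add_distrib]
      refine Finset.sum_congr rfl fun u _ => ?_
      rw [Finset.mul_sum, ← Finset.sum_add_distrib]
      exact Finset.sum_congr rfl fun v _ => by ring
    rw [hcomb]
    have hpart1 : 0 ≤ ∑ u, ∑ v, (∑ π ∈ autSet H, x (π u) * x (π v)) * Z u v := by
      have hswap : ∑ u, ∑ v, (∑ π ∈ autSet H, x (π u) * x (π v)) * Z u v
          = ∑ π ∈ autSet H, ∑ u, ∑ v, Z u v * x (π u) * x (π v) := by
        calc ∑ u, ∑ v, (∑ π ∈ autSet H, x (π u) * x (π v)) * Z u v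
            = ∑ u, ∑ v, ∑ π ∈ autSet H, Z u v * x (π u) * x (π v) := by
              refine Finset.sum_congr rfl fun u _ => Finset.sum_congr rfl fun v _ => ?_
              rw [Finset.sum_mul]
              exact Finset.sum_congr rfl fun π _ => by ring
          _ = ∑ u, ∑ π ∈ autSet H, ∑ v, Z u v * x (π u) * x (π v) :=
              Finset.sum_congr rfl fun u _ => Finset.sum_comm
          _ = ∑ π ∈ autSet H, ∑ u, ∑ v, Z u v * x (π u) * x (π v) := Finset.sum_comm
      rw [hswap]
      exact Finset.sum_nonneg fun π _ => hZq (fun w => x (π w))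
    have hpart2 : 0 ≤ ∑ u, ∑ v, (Λ - (Λ - μ) * A u v
        - (nV * Λ / g) * (∑ π ∈ autSet H, x (π u) * x (π v))) * Z u v := by
      refine Finset.sum_nonneg fun u _ => Finset.sum_nonneg fun v _ =>
        mul_nonneg ?_ (hZnn u v)
      by_cases huv : u = v
      · subst huv
        have hdiag : (∑ π ∈ autSet H, x (π u) * x (π u)) = g / nV := by
          rw [← hfval u]
          exact Finset.sum_congr rfl fun π _ => (pow_two _).symm
        rw [hdiag, hAapp, if_neg (H.irrefl)]
        have hq : nV * Λ / g * (g / nV) = Λ := by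
          field_simp
        rw [mul_zero, sub_zero, hq, sub_self]
      · by_cases hadj : H.Adj u v
        · rw [hAapp, if_pos hadj, hgpedge u v hadj, hedgeval]
          have hexp : Λ - (Λ - μ) * 1 - nV * Λ / g * (g * μ / D)
              = (-μ) * (nV * Λ - D) / D := by
            field_simp
            ring
          rw [hexp]
          apply div_nonneg _ hD.le
          apply mul_nonneg (by linarith) (by linarith)
        · rw [hAapp, if_neg hadj]
          have h1 := hgple u v
          have h2 : nV * Λ / g * (∑ π ∈ autSet H, x (π u) * x (π v))
              ≤ nV * Λ / g * (g / nV) :=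
            mul_le_mul_of_nonneg_left h1 (by positivity)
          have h3 : nV * Λ / g * (g / nV) = Λ := by field_simp
          rw [h3] at h2
          linarith
    have hfac : 0 ≤ (nV * Λ / g)
        * (∑ u, ∑ v, (∑ π ∈ autSet H, x (π u) * x (π v)) * Z u v) :=
      mul_nonneg (by positivity) hpart1
    linarith
  have hTeq : ∑ u, ∑ v, (1 - A u v) * Z u v
      = (∑ u, ∑ v, Z u v) - ∑ u, ∑ v, A u v * Z u v := by
    rw [← Finset.sum_sub_distrib]
    refine Finset.sum_congr rfl fun u _ => ?_
    rw [← Finset.sum_sub_distrib]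
    exact Finset.sum_congr rfl fun v _ => by ring
  set S : ℝ := ∑ u, ∑ v, Z u v with hSdef
  set Tt : ℝ := ∑ u, ∑ v, (1 - A u v) * Z u v with hTdef
  have hET : ∑ u, ∑ v, A u v * Z u v = S - Tt := by linarith [hTeq]
  rw [hET] at key
  have habs : |μ| = -μ := abs_of_neg hμneg
  have hmne : (-μ) ≠ 0 := ne_of_gt (by linarith)
  have h7 : (1 + Λ / |μ|) * Tt = ((Λ - μ) * Tt) / (-μ) := by
    rw [habs]
    rw [show (1 : ℝ) + Λ / (-μ) = ((-μ) + Λ) / (-μ) by rw [add_div, div_self hmne]]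
    rw [div_mul_eq_mul_div]
    congr 1
    ring
  rw [h7, le_div_iff₀ (by linarith : (0:ℝ) < -μ)]
  nlinarith [key]
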